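/- arXiv:1704.05616 — 2 statements merged into one kernel-verified Lean document; each statement's English description precedes it below -/
import Mathlib

section
/- A T-invariant Borel probability measure μ is tangent to the functional Q at φ ∈ C(X) (i.e., ∫ψ dμ ≤ Q(φ+ψ) − Q(φ) for all ψ ∈ C(X)) if and only if μ is a φ-maximizing measure, i.e., ∫φ dμ = Q(φ). -/
open MeasureTheory Set Topology

variable {X : Type*} [MetricSpace X] [CompactSpace X] [MeasurableSpace X] [BorelSpace X]

/-- The set of `T`-invariant Borel probability measures on `X`. -/
noncomputable def invSet (T : X → X) : Set (ProbabilityMeasure X) :=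
  {μ | (μ : Measure X).map T = (μ : Measure X)}

/-- `Q φ = max_{μ ∈ M(X,T)} ∫ φ dμ` (as a supremum). -/
noncomputable def QFun (T : X → X) (φ : C(X, ℝ)) : ℝ :=
  sSup ((fun μ : ProbabilityMeasure X => ∫ x, φ x ∂(μ : Measure X)) '' invSet T)

/-- The set of `φ`-maximizing measures. -/
noncomputable def maxSet (T : X → X) (φ : C(X, ℝ)) : Set (ProbabilityMeasure X) :=
  {μ | μ ∈ invSet T ∧ ∫ x, φ x ∂(μ : Measure X) = QFun T φ}

/-- The set of ergodic `T`-invariant Borel probability measures. -/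
def ergSet (T : X → X) : Set (ProbabilityMeasure X) :=
  {μ | Ergodic T (μ : Measure X)}

/-- Support of a measure: the intersection of all closed sets of full measure. -/
noncomputable def msupport {Y : Type*} [TopologicalSpace Y] [MeasurableSpace Y]
    (α : Measure Y) : Set Y :=
  ⋂₀ {C | IsClosed C ∧ α C = 1}

/-- `S` is arcwise-connected: any two points are joined by a homeomorphism-onto-image
path inside `S`. -/
def ArcConnIn {A : Type*} [TopologicalSpace A] (S : Set A) : Prop :=
  ∀ μ ∈ S, ∀ ν ∈ S, ∃ f : unitInterval → A,
    Topology.IsEmbedding f ∧ Set.range f ⊆ S ∧ f 0 = μ ∧ f 1 = ν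

lemma bddAboveAux (T : X → X) (f : C(X, ℝ)) :
    BddAbove ((fun μ : ProbabilityMeasure X => ∫ x, f x ∂(μ : Measure X)) '' invSet T) := by
  refine ⟨‖f‖, ?_⟩
  rintro _ ⟨ν, _, rfl⟩
  refine le_of_abs_le ?_
  calc |∫ x, f x ∂(ν : Measure X)|
      ≤ ‖f‖ * ((ν : Measure X) Set.univ).toReal :=
        norm_integral_le_of_norm_le_const (by
          filter_upwards with x
          exact f.norm_coe_le_norm x)
    _ = ‖f‖ := by simp

lemma le_QFun (T : X → X) (f : C(X, ℝ)) (μ : ProbabilityMeasure X) (hμ : μ ∈ invSet T) :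
    ∫ x, f x ∂(μ : Measure X) ≤ QFun T f :=
  le_csSup (bddAboveAux T f) ⟨μ, hμ, rfl⟩

lemma QFun_zero (T : X → X) (hne : (invSet T).Nonempty) : QFun T 0 = 0 := by
  have : ((fun μ : ProbabilityMeasure X => ∫ x, (0 : C(X, ℝ)) x ∂(μ : Measure X)) '' invSet T)
      = {0} := by
    ext y
    simp [hne]
  rw [QFun, this, csSup_singleton]
/-- An invariant measure `μ` is tangent to `Q` at `φ` iff `μ` is `φ`-maximizing. -/
theorem stmt1 (T : X → X) (hT : Continuous T) (hne : (invSet T).Nonempty)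
    (μ : ProbabilityMeasure X) (hμ : μ ∈ invSet T) (φ : C(X, ℝ)) :
    (∀ ψ : C(X, ℝ), ∫ x, ψ x ∂(μ : Measure X) ≤ QFun T (φ + ψ) - QFun T φ) ↔
      ∫ x, φ x ∂(μ : Measure X) = QFun T φ := by
  constructor
  · intro h
    have h1 := h (-φ)
    have h2 : φ + -φ = 0 := by ring
    rw [h2, QFun_zero T hne] at h1
    have h3 : ∫ x, (-φ) x ∂(μ : Measure X) = -∫ x, φ x ∂(μ : Measure X) := by
      simp only [ContinuousMap.neg_apply]
      exact integral_neg _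
    rw [h3] at h1
    have h4 := le_QFun T φ μ hμ
    linarith
  · intro h ψ
    have hint : ∀ f : C(X, ℝ), Integrable (fun x => f x) (μ : Measure X) :=
      fun f => f.continuous.integrable_of_hasCompactSupport
        (HasCompactSupport.of_compactSpace _)
    have hadd : ∫ x, (φ + ψ) x ∂(μ : Measure X)
        = ∫ x, φ x ∂(μ : Measure X) + ∫ x, ψ x ∂(μ : Measure X) := by
      simpa using integral_add (hint φ) (hint ψ)
    have h5 := le_QFun T (φ + ψ) μ hμ
    rw [hadd, h] at h5
    linarith
end

section
/- (Bishop–Phelps) Let Γ : V → ℝ be a convex continuous functional on a Banach space V. For every bounded linear functional F₀ bounded by Γ (i.e., F₀(ψ) ≤ Γ(ψ) for all ψ), every φ₀ ∈ V, and every ε > 0, there exist a bounded linear functional F and φ ∈ V such that F is tangent to Γ at φ, ‖F₀ − F‖ ≤ ε, and ‖φ₀ − φ‖ ≤ (1/ε)(Γ(φ₀) − F₀(φ₀) + s(F₀)), where s(F₀) = sup{F₀(ψ) − Γ(ψ) : ψ ∈ V}. -/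
open Set

open Filter Topology in

/-- Ekeland's variational principle (strong form, continuous version). -/
lemma ekeland_aux {X : Type*} [MetricSpace X] [CompleteSpace X] (g : X → ℝ)
    (hg : Continuous g) (c : ℝ) (hc : ∀ x, c ≤ g x) (ε : ℝ) (hε : 0 < ε) (x₀ : X) :
    ∃ x : X, g x + ε * dist x x₀ ≤ g x₀ ∧ ∀ y, g x ≤ g y + ε * dist x y := by
  have exStep : ∀ (n : ℕ) (x : X), ∃ x' : X, (g x' + ε * dist x' x ≤ g x) ∧
      ∀ y, g y + ε * dist y x ≤ g x → g x' ≤ g y + (1/2 : ℝ)^n := by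
    intro n x
    set S : Set X := {y | g y + ε * dist y x ≤ g x} with hS
    have hxS : x ∈ S := by simp [hS]
    have hne : (g '' S).Nonempty := ⟨g x, Set.mem_image_of_mem _ hxS⟩
    have hbdd : BddBelow (g '' S) := ⟨c, by rintro _ ⟨y, _, rfl⟩; exact hc y⟩
    have hlt : sInf (g '' S) < sInf (g '' S) + (1/2 : ℝ)^n := by
      have : (0:ℝ) < (1/2 : ℝ)^n := by positivity
      linarith
    obtain ⟨_, ⟨y, hyS, rfl⟩, hy⟩ := exists_lt_of_csInf_lt hne hlt
    refine ⟨y, hyS, fun z hz => ?_⟩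
    have : sInf (g '' S) ≤ g z := csInf_le hbdd (Set.mem_image_of_mem _ hz)
    linarith
  choose step h1 h2 using exStep
  let seq : ℕ → X := fun n => Nat.rec x₀ (fun k xk => step k xk) n
  have hseq0 : seq 0 = x₀ := rfl
  have hseqs : ∀ n, seq (n+1) = step n (seq n) := fun n => rfl
  have hchain : ∀ n m, n ≤ m → g (seq m) + ε * dist (seq m) (seq n) ≤ g (seq n) := by
    intro n m hnm
    induction m, hnm using Nat.le_induction with
    | base => simp
    | succ m hnm ih =>
      have h₁ := h1 m (seq m)
      rw [← hseqs m] at h₁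
      have tri := dist_triangle (seq (m+1)) (seq m) (seq n)
      have tri' : ε * dist (seq (m+1)) (seq n) ≤
          ε * (dist (seq (m+1)) (seq m) + dist (seq m) (seq n)) :=
        mul_le_mul_of_nonneg_left tri hε.le
      rw [mul_add] at tri'
      linarith
  have hanti : ∀ n m, n ≤ m → g (seq m) ≤ g (seq n) := by
    intro n m hnm
    have := hchain n m hnm
    have := mul_nonneg hε.le (dist_nonneg (x := seq m) (y := seq n))
    linarith
  have hLbdd : BddBelow (Set.range fun n => g (seq n)) := ⟨c, by rintro _ ⟨n, rfl⟩; exact hc _⟩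
  set L := ⨅ n, g (seq n) with hLdef
  have hL : Tendsto (fun n => g (seq n)) atTop (𝓝 L) :=
    tendsto_atTop_ciInf (fun n m h => hanti n m h) hLbdd
  have hLle : ∀ n, L ≤ g (seq n) := fun n => ciInf_le hLbdd n
  have hcauchy : CauchySeq seq := by
    apply cauchySeq_of_le_tendsto_0 (fun N => (g (seq N) - L) / ε)
    · intro n m N hn hm
      rcases le_total n m with h | h
      · have := hchain n m h
        rw [le_div_iff₀ hε, dist_comm]
        have h2' := hanti N n hn
        have h3' := hLle m
        nlinarith
      · have := hchain m n h
        rw [le_div_iff₀ hε]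
        have h2' := hanti N m hm
        have h3' := hLle n
        nlinarith
    · have : Tendsto (fun N => g (seq N) - L) atTop (𝓝 (L - L)) := hL.sub_const L
      rw [sub_self] at this
      simpa using this.div_const ε
  obtain ⟨z, hz⟩ := cauchySeq_tendsto_of_complete hcauchy
  have hgz : Tendsto (fun m => g (seq m)) atTop (𝓝 (g z)) := (hg.tendsto z).comp hz
  have hzchain : ∀ n, g z + ε * dist z (seq n) ≤ g (seq n) := by
    intro n
    have t1 : Tendsto (fun m => g (seq m) + ε * dist (seq m) (seq n)) atTop
        (𝓝 (g z + ε * dist z (seq n))) :=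
      hgz.add (tendsto_const_nhds.mul (hz.dist tendsto_const_nhds))
    exact le_of_tendsto t1 (Filter.eventually_atTop.2 ⟨n, fun m hm => hchain n m hm⟩)
  refine ⟨z, by simpa [hseq0] using hzchain 0, ?_⟩
  intro y
  by_contra hcon
  push_neg at hcon
  have hyS : ∀ n, g y + ε * dist y (seq n) ≤ g (seq n) := by
    intro n
    have hzc := hzchain n
    have tri := dist_triangle y z (seq n)
    have tri' : ε * dist y (seq n) ≤ ε * (dist y z + dist z (seq n)) :=
      mul_le_mul_of_nonneg_left tri hε.le
    rw [mul_add] at tri'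
    have hd : dist y z = dist z y := dist_comm _ _
    rw [hd] at tri'
    linarith
  have hstep2' : ∀ n, g (seq (n+1)) ≤ g y + (1/2 : ℝ)^n := by
    intro n
    rw [hseqs n]
    exact h2 n (seq n) y (hyS n)
  have hle : g z ≤ g y := by
    have t2 : Tendsto (fun n => g (seq (n+1))) atTop (𝓝 (g z)) :=
      hgz.comp (tendsto_add_atTop_nat 1)
    have t3 : Tendsto (fun n : ℕ => g y + (1/2 : ℝ)^n) atTop (𝓝 (g y)) := by
      have := tendsto_pow_atTop_nhds_zero_of_lt_one (by norm_num : (0:ℝ) ≤ 1/2)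
        (by norm_num : (1/2 : ℝ) < 1)
      simpa using tendsto_const_nhds.add this
    exact le_of_tendsto_of_tendsto' t2 t3 hstep2'
  have : 0 ≤ ε * dist z y := mul_nonneg hε.le dist_nonneg
  linarith

/-- The Bishop–Phelps theorem: a `Γ`-bounded functional can be approximated by a
`Γ`-tangent one, with quantitative control on the base point. -/
theorem stmt3 {V : Type*} [NormedAddCommGroup V] [NormedSpace ℝ V] [CompleteSpace V]
    (Γ : V → ℝ) (hconv : ConvexOn ℝ Set.univ Γ) (hcont : Continuous Γ)
    (F₀ : V →L[ℝ] ℝ) (hbdd : ∀ ψ : V, F₀ ψ ≤ Γ ψ) (φ₀ : V) (ε : ℝ) (hε : 0 < ε) :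
    ∃ (F : V →L[ℝ] ℝ) (φ : V),
      (∀ ψ : V, F ψ ≤ Γ (φ + ψ) - Γ φ) ∧ ‖F₀ - F‖ ≤ ε ∧
      ‖φ₀ - φ‖ ≤ (1 / ε) * (Γ φ₀ - F₀ φ₀ + sSup (Set.range fun ψ : V => F₀ ψ - Γ ψ)) := by
  classical
  set g : V → ℝ := fun v => Γ v - F₀ v with hgdef
  have hgcont : Continuous g := hcont.sub F₀.continuous
  set s : ℝ := sSup (Set.range fun ψ : V => F₀ ψ - Γ ψ) with hsdef
  have hsbdd : BddAbove (Set.range fun ψ : V => F₀ ψ - Γ ψ) :=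
    ⟨0, by rintro _ ⟨ψ, rfl⟩; simpa using sub_nonpos.2 (hbdd ψ)⟩
  have hs_le : ∀ ψ, F₀ ψ - Γ ψ ≤ s := fun ψ => le_csSup hsbdd ⟨ψ, rfl⟩
  have hglb : ∀ ψ, -s ≤ g ψ := fun ψ => by have := hs_le ψ; simp only [hgdef]; linarith
  -- Ekeland
  obtain ⟨φ, hφ1, hφ2⟩ := ekeland_aux g hgcont (-s) hglb ε hε φ₀
  -- the convexity inequality for g
  have hgcvx : ∀ (x y : V) (α β : ℝ), 0 ≤ α → 0 ≤ β → α + β = 1 →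
      g (α • x + β • y) ≤ α * g x + β * g y := by
    intro x y α β hα hβ hαβ
    have hΓ := hconv.2 (Set.mem_univ x) (Set.mem_univ y) hα hβ hαβ
    have hF : F₀ (α • x + β • y) = α * F₀ x + β * F₀ y := by
      simp [map_add, map_smul]
    simp only [hgdef, smul_eq_mul] at *
    rw [hF]
    linarith [hΓ]
  set q : V → ℝ := fun v => g (φ + v) - g φ with hqdef
  have hq0 : q 0 = 0 := by simp [hqdef]
  have hqlb : ∀ v, -(ε * ‖v‖) ≤ q v := by
    intro v
    have := hφ2 (φ + v)
    have hd : dist φ (φ + v) = ‖v‖ := by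
      rw [dist_eq_norm]; simp
    rw [hd] at this
    simp only [hqdef]; linarith
  have hqcvx : ∀ (x y : V) (α β : ℝ), 0 ≤ α → 0 ≤ β → α + β = 1 →
      q (α • x + β • y) ≤ α * q x + β * q y := by
    intro x y α β hα hβ hαβ
    have key : φ + (α • x + β • y) = α • (φ + x) + β • (φ + y) := by
      have : α • (φ + x) + β • (φ + y) = (α + β) • φ + (α • x + β • y) := by module
      rw [this, hαβ, one_smul]
    have := hgcvx (φ + x) (φ + y) α β hα hβ hαβ
    have hone : α * g φ + β * g φ = g φ := by rw [← add_mul, hαβ, one_mul]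
    simp only [hqdef]
    rw [key]
    linarith
  -- inf-convolution h
  set h : V → ℝ := fun v => sInf (Set.range fun a : V => q a + ε * ‖v - a‖) with hhdef
  have hhbdd : ∀ v, ∀ r ∈ (Set.range fun a : V => q a + ε * ‖v - a‖), -(ε * ‖v‖) ≤ r := by
    rintro v _ ⟨a, rfl⟩
    have h1 := hqlb a
    have h2 : ‖a‖ - ‖v‖ ≤ ‖v - a‖ := by
      have := norm_sub_norm_le a v
      rw [norm_sub_rev] at this
      linarith
    have h3 : ε * (‖a‖ - ‖v‖) ≤ ε * ‖v - a‖ := mul_le_mul_of_nonneg_left h2 hε.le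
    have h4 : ε * (‖a‖ - ‖v‖) = ε * ‖a‖ - ε * ‖v‖ := by ring
    show -(ε * ‖v‖) ≤ q a + ε * ‖v - a‖
    linarith
  have hhBdd : ∀ v, BddBelow (Set.range fun a : V => q a + ε * ‖v - a‖) :=
    fun v => ⟨-(ε * ‖v‖), fun r hr => hhbdd v r hr⟩
  have hhne : ∀ v, (Set.range fun a : V => q a + ε * ‖v - a‖).Nonempty := fun v => ⟨_, ⟨0, rfl⟩⟩
  have hhlb : ∀ v, -(ε * ‖v‖) ≤ h v := fun v => le_csInf (hhne v) (hhbdd v)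
  have hh_le : ∀ v, h v ≤ q v := by
    intro v
    have : q v + ε * ‖v - v‖ ∈ (Set.range fun a : V => q a + ε * ‖v - a‖) := ⟨v, rfl⟩
    have := csInf_le (hhBdd v) this
    simpa using this
  have hh_le_norm : ∀ v, h v ≤ ε * ‖v‖ := by
    intro v
    have : q 0 + ε * ‖v - 0‖ ∈ (Set.range fun a : V => q a + ε * ‖v - a‖) := ⟨0, rfl⟩
    have := csInf_le (hhBdd v) this
    simpa [hq0] using this
  have hh0 : h 0 = 0 := le_antisymm (by simpa using hh_le_norm 0) (by simpa using hhlb 0)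
  have hhcvx : ∀ (x y : V) (α β : ℝ), 0 ≤ α → 0 ≤ β → α + β = 1 →
      h (α • x + β • y) ≤ α * h x + β * h y := by
    intro x y α β hα hβ hαβ
    refine le_of_forall_pos_le_add (fun δ hδ => ?_)
    have hδ2 : (0:ℝ) < δ/2 := by linarith
    obtain ⟨_, ⟨a, rfl⟩, ha⟩ := exists_lt_of_csInf_lt (hhne x)
      (show sInf (Set.range fun a : V => q a + ε * ‖x - a‖) < h x + δ/2 from
        by show h x < h x + δ/2; linarith)
    obtain ⟨_, ⟨b, rfl⟩, hb⟩ := exists_lt_of_csInf_lt (hhne y)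
      (show sInf (Set.range fun a : V => q a + ε * ‖y - a‖) < h y + δ/2 from
        by show h y < h y + δ/2; linarith)
    dsimp only at ha hb
    have hmem : q (α • a + β • b) + ε * ‖(α • x + β • y) - (α • a + β • b)‖ ∈
        (Set.range fun c : V => q c + ε * ‖(α • x + β • y) - c‖) := ⟨_, rfl⟩
    have hq' := hqcvx a b α β hα hβ hαβ
    have hnorm : ‖(α • x + β • y) - (α • a + β • b)‖ ≤ α * ‖x - a‖ + β * ‖y - b‖ := by
      have e : (α • x + β • y) - (α • a + β • b) = α • (x - a) + β • (y - b) := by module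
      rw [e]
      calc ‖α • (x - a) + β • (y - b)‖ ≤ ‖α • (x - a)‖ + ‖β • (y - b)‖ := norm_add_le _ _
        _ = α * ‖x - a‖ + β * ‖y - b‖ := by
          rw [norm_smul, norm_smul, Real.norm_eq_abs, Real.norm_eq_abs,
            abs_of_nonneg hα, abs_of_nonneg hβ]
    have hinf : h (α • x + β • y) ≤
        q (α • a + β • b) + ε * ‖(α • x + β • y) - (α • a + β • b)‖ :=
      csInf_le (hhBdd (α • x + β • y)) hmem
    have hεn : ε * ‖(α • x + β • y) - (α • a + β • b)‖ ≤
        ε * (α * ‖x - a‖ + β * ‖y - b‖) := mul_le_mul_of_nonneg_left hnorm hε.le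
    have e1 : ε * (α * ‖x - a‖ + β * ‖y - b‖) =
        α * (ε * ‖x - a‖) + β * (ε * ‖y - b‖) := by ring
    have c1 : α * (q a + ε * ‖x - a‖) ≤ α * (h x + δ/2) :=
      mul_le_mul_of_nonneg_left ha.le hα
    have c2 : β * (q b + ε * ‖y - b‖) ≤ β * (h y + δ/2) :=
      mul_le_mul_of_nonneg_left hb.le hβ
    have c3 : α * (h x + δ/2) + β * (h y + δ/2) =
        α * h x + β * h y + (α + β) * (δ/2) := by ring
    rw [hαβ, one_mul] at c3
    calc h (α • x + β • y) ≤ q (α • a + β • b) + ε * ‖(α • x + β • y) - (α • a + β • b)‖ := hinf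
      _ ≤ (α * q a + β * q b) + (α * (ε * ‖x - a‖) + β * (ε * ‖y - b‖)) := by
          rw [← e1]; linarith
      _ = α * (q a + ε * ‖x - a‖) + β * (q b + ε * ‖y - b‖) := by ring
      _ ≤ α * (h x + δ/2) + β * (h y + δ/2) := add_le_add c1 c2
      _ = α * h x + β * h y + δ / 2 := c3
      _ ≤ α * h x + β * h y + δ := by linarith
  -- monotone difference quotients of h
  have hmono : ∀ (v : V) (s' t : ℝ), 0 < s' → s' ≤ t → h (s' • v) / s' ≤ h (t • v) / t := by
    intro v s' t hs ht
    have htpos : 0 < t := lt_of_lt_of_le hs ht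
    have hα : (0:ℝ) ≤ s'/t := by positivity
    have hβ : (0:ℝ) ≤ 1 - s'/t := by
      have : s'/t ≤ 1 := (div_le_one htpos).2 ht
      linarith
    have hαβ : s'/t + (1 - s'/t) = 1 := by ring
    have key := hhcvx (t • v) 0 (s'/t) (1 - s'/t) hα hβ hαβ
    rw [smul_zero, add_zero, hh0, mul_zero, add_zero, smul_smul,
      div_mul_cancel₀ _ htpos.ne'] at key
    rw [div_le_div_iff₀ hs htpos]
    have key2 := mul_le_mul_of_nonneg_right key htpos.le
    have e : s'/t * h (t • v) * t = s' * h (t • v) := by field_simp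
    rw [e] at key2
    linarith
  -- the sublinear functional N (directional derivative of h at 0)
  set N : V → ℝ := fun v => sInf ((fun t : ℝ => h (t • v) / t) '' Set.Ioi 0) with hNdef
  have hNne : ∀ v, ((fun t : ℝ => h (t • v) / t) '' Set.Ioi 0).Nonempty :=
    fun v => ⟨_, ⟨1, by norm_num, rfl⟩⟩
  have hNlbd : ∀ v, ∀ r ∈ ((fun t : ℝ => h (t • v) / t) '' Set.Ioi 0), -(ε * ‖v‖) ≤ r := by
    rintro v _ ⟨t, ht, rfl⟩
    have ht' : (0:ℝ) < t := ht
    have h1 := hhlb (t • v)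
    have h2 : ‖t • v‖ = t * ‖v‖ := by
      rw [norm_smul, Real.norm_eq_abs, abs_of_pos ht']
    rw [h2] at h1
    show -(ε * ‖v‖) ≤ h (t • v) / t
    rw [le_div_iff₀ ht']
    nlinarith
  have hNBdd : ∀ v, BddBelow ((fun t : ℝ => h (t • v) / t) '' Set.Ioi 0) :=
    fun v => ⟨-(ε * ‖v‖), fun r hr => hNlbd v r hr⟩
  have hN_le_h : ∀ v, N v ≤ h v := by
    intro v
    have : h v ∈ ((fun t : ℝ => h (t • v) / t) '' Set.Ioi 0) := ⟨1, by norm_num, by simp⟩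
    exact csInf_le (hNBdd v) this
  have hNlb : ∀ v, -(ε * ‖v‖) ≤ N v := fun v => le_csInf (hNne v) (hNlbd v)
  have hN0 : N 0 = 0 :=
    le_antisymm (by simpa [hh0] using (hN_le_h 0)) (by simpa using hNlb 0)
  -- positive homogeneity of N
  have hNscale : ∀ (c : ℝ), 0 < c → ∀ x, N (c • x) ≤ c * N x := by
    intro c hc x
    have key : ∀ b ∈ ((fun t : ℝ => h (t • x) / t) '' Set.Ioi 0), N (c • x) ≤ c * b := by
      rintro _ ⟨u, hu, rfl⟩
      have hu' : (0:ℝ) < u := hu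
      have ht : (0:ℝ) < u / c := by positivity
      have hmem : h ((u/c) • (c • x)) / (u/c) ∈
          ((fun t : ℝ => h (t • (c • x)) / t) '' Set.Ioi 0) := ⟨u/c, ht, rfl⟩
      have hle := csInf_le (hNBdd (c • x)) hmem
      have heq : h ((u/c) • (c • x)) / (u/c) = c * (h (u • x) / u) := by
        rw [smul_smul, div_mul_cancel₀ _ hc.ne']
        field_simp
      rw [heq] at hle
      exact hle
    have h1 : ∀ b ∈ ((fun t : ℝ => h (t • x) / t) '' Set.Ioi 0), N (c • x) / c ≤ b := by
      intro b hb
      rw [div_le_iff₀ hc]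
      have := key b hb
      linarith [mul_comm c b]
    have h2 : N (c • x) / c ≤ N x := le_csInf (hNne x) h1
    rw [div_le_iff₀ hc] at h2
    linarith [mul_comm (N x) c]
  have hNhom : ∀ (c : ℝ), 0 < c → ∀ x, N (c • x) = c * N x := by
    intro c hc x
    refine le_antisymm (hNscale c hc x) ?_
    have h1 := hNscale c⁻¹ (by positivity) (c • x)
    rw [smul_smul, inv_mul_cancel₀ hc.ne', one_smul] at h1
    have h2 := mul_le_mul_of_nonneg_left h1 hc.le
    rw [← mul_assoc, mul_inv_cancel₀ hc.ne', one_mul] at h2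
    exact h2
  -- subadditivity of N
  have hNadd : ∀ u v, N (u + v) ≤ N u + N v := by
    intro u v
    refine le_of_forall_pos_le_add (fun δ hδ => ?_)
    have hδ2 : (0:ℝ) < δ/2 := by linarith
    obtain ⟨_, ⟨t₁, ht₁, rfl⟩, ha⟩ := exists_lt_of_csInf_lt (hNne u)
      (show sInf ((fun t : ℝ => h (t • u) / t) '' Set.Ioi 0) < N u + δ/2 from
        by show N u < N u + δ/2; linarith)
    obtain ⟨_, ⟨t₂, ht₂, rfl⟩, hb⟩ := exists_lt_of_csInf_lt (hNne v)
      (show sInf ((fun t : ℝ => h (t • v) / t) '' Set.Ioi 0) < N v + δ/2 from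
        by show N v < N v + δ/2; linarith)
    dsimp only at ha hb
    have ht₁' : (0:ℝ) < t₁ := ht₁
    have ht₂' : (0:ℝ) < t₂ := ht₂
    set t : ℝ := min t₁ t₂ / 2 with htdef
    have ht : (0:ℝ) < t := by
      have := lt_min ht₁' ht₂'
      simp only [htdef]
      linarith
    have h2t₁ : 2 * t ≤ t₁ := by
      have := min_le_left t₁ t₂
      simp only [htdef]; linarith
    have h2t₂ : 2 * t ≤ t₂ := by
      have := min_le_right t₁ t₂
      simp only [htdef]; linarith
    have hc := hhcvx ((2*t) • u) ((2*t) • v) (1/2) (1/2)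
      (by norm_num) (by norm_num) (by norm_num)
    have eq1 : (1/2 : ℝ) • ((2*t) • u) + (1/2 : ℝ) • ((2*t) • v) = t • (u + v) := by
      module
    rw [eq1] at hc
    have hmemuv : h (t • (u + v)) / t ∈
        ((fun r : ℝ => h (r • (u + v)) / r) '' Set.Ioi 0) := ⟨t, ht, rfl⟩
    have hN1 : N (u + v) ≤ h (t • (u + v)) / t := csInf_le (hNBdd (u + v)) hmemuv
    have hm1 : h ((2*t) • u) / (2*t) ≤ h (t₁ • u) / t₁ := hmono u (2*t) t₁ (by linarith) h2t₁
    have hm2 : h ((2*t) • v) / (2*t) ≤ h (t₂ • v) / t₂ := hmono v (2*t) t₂ (by linarith) h2t₂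
    have harith : h (t • (u + v)) / t ≤ h ((2*t) • u) / (2*t) + h ((2*t) • v) / (2*t) := by
      rw [div_le_iff₀ ht]
      have e : (h ((2*t) • u) / (2*t) + h ((2*t) • v) / (2*t)) * t =
          1/2 * h ((2*t) • u) + 1/2 * h ((2*t) • v) := by
        field_simp
      rw [e]
      linarith
    linarith
  -- Hahn–Banach
  obtain ⟨G, -, hG⟩ := exists_extension_of_le_sublinear
    ((0 : V →ₗ[ℝ] ℝ).toPMap ⊥) N hNhom hNadd
    (by
      rintro ⟨x, hx⟩
      have hx0 : x = 0 := (Submodule.mem_bot ℝ).1 hx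
      simp [LinearMap.toPMap_apply, hx0, hN0])
  have hGabs : ∀ v, ‖G v‖ ≤ ε * ‖v‖ := by
    intro v
    rw [Real.norm_eq_abs, abs_le]
    constructor
    · have h1 : G (-v) ≤ N (-v) := hG _
      have h2 : N (-v) ≤ ε * ‖-v‖ := le_trans (hN_le_h _) (hh_le_norm _)
      rw [norm_neg] at h2
      have h3 : G (-v) = -G v := map_neg _ _
      linarith
    · exact le_trans (hG v) (le_trans (hN_le_h v) (hh_le_norm v))
  set Gc : V →L[ℝ] ℝ := G.mkContinuous ε hGabs with hGcdef
  refine ⟨F₀ + Gc, φ, ?_, ?_, ?_⟩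
  · intro ψ
    have h1 : G ψ ≤ q ψ := le_trans (hG ψ) (le_trans (hN_le_h ψ) (hh_le ψ))
    have h2 : F₀ (φ + ψ) = F₀ φ + F₀ ψ := map_add _ _ _
    simp only [hqdef, hgdef] at h1
    have h3 : (F₀ + Gc) ψ = F₀ ψ + G ψ := rfl
    rw [h3]
    linarith
  · have h1 : F₀ - (F₀ + Gc) = -Gc := by abel
    rw [h1, norm_neg]
    exact LinearMap.mkContinuous_norm_le _ hε.le _
  · have hφlb := hglb φ
    have hd : dist φ φ₀ = ‖φ₀ - φ‖ := by rw [dist_eq_norm, norm_sub_rev]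
    rw [hd] at hφ1
    have he : (1/ε) * (Γ φ₀ - F₀ φ₀ + s) = ((Γ φ₀ - F₀ φ₀) + s) / ε := by ring
    have hgφ₀ : g φ₀ = Γ φ₀ - F₀ φ₀ := rfl
    rw [he, le_div_iff₀ hε]
    have h2 : ‖φ₀ - φ‖ * ε = ε * ‖φ₀ - φ‖ := mul_comm _ _
    rw [h2, ← hgφ₀]
    linarith
end
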